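/- For c ∈ {13, 14}, there exists no finite simple graph on a nonempty vertex set that is 6-regular and in which the subgraph induced by the open neighbourhood of every vertex has exactly c edges; that is, neither a (6,13)-constant graph nor a (6,14)-constant graph exists. -/

import Mathlib

/-- The number of edges of the subgraph of `G` induced by the open
neighbourhood of the vertex `v` (the quantity `e(v)`). -/
noncomputable def nbhdEdgeCount {V : Type*} (G : SimpleGraph V) (v : V) : ℕ :=
  Nat.card (SimpleGraph.induce (G.neighborSet v) G).edgeSet

open Finset SimpleGraph

lemma handshake_nbhd {V : Type*} [Fintype V] [DecidableEq V] (G : SimpleGraph V)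
    [DecidableRel G.Adj] (v : V) :
    2 * nbhdEdgeCount G v
      = ∑ u ∈ G.neighborFinset v, (G.neighborFinset v ∩ G.neighborFinset u).card := by
  classical
  set s := G.neighborSet v with hs
  set H := G.induce s with hH
  haveI : DecidableRel H.Adj := Classical.decRel _
  have h1 : nbhdEdgeCount G v = H.edgeFinset.card := by
    rw [nbhdEdgeCount, Nat.card_eq_fintype_card, ← SimpleGraph.edgeFinset_card]
  have hdeg : ∀ a : ↥s, H.degree a = (G.neighborFinset v ∩ G.neighborFinset ↑a).card := by
    intro a
    have : G.neighborFinset v ∩ G.neighborFinset ↑a = (G.neighborSet v ∩ G.neighborSet ↑a).toFinset := by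
      rw [Set.toFinset_inter]; rfl
    rw [this, Set.toFinset_card, ← SimpleGraph.card_neighborSet_eq_degree]
    exact Fintype.card_congr
      ((Equiv.subtypeSubtypeEquivSubtypeInter (· ∈ G.neighborSet v) (· ∈ G.neighborSet ↑a)))
  rw [h1, ← SimpleGraph.sum_degrees_eq_twice_card_edges H]
  rw [Finset.sum_subtype (G.neighborFinset v) (fun x => G.mem_neighborFinset v x)
      (fun u => (G.neighborFinset v ∩ G.neighborFinset u).card)]
  exact Finset.sum_congr rfl fun a _ => (hdeg a)

section main
variable {V : Type} [Fintype V] [DecidableEq V] (G : SimpleGraph V) [DecidableRel G.Adj]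

set_option maxHeartbeats 2000000 in
theorem main_contradiction (c : ℕ) (hc : c = 13 ∨ c = 14)
    (hdeg : ∀ v : V, (G.neighborFinset v).card = 6)
    (hsum : ∀ v : V, ∑ w ∈ G.neighborFinset v,
        (G.neighborFinset v ∩ G.neighborFinset w).card = 2 * c)
    (v0 : V) : False := by
  classical
  set Nv := G.neighborFinset v0 with hNv
  -- generic bound: codegree of an adjacent pair is ≤ 5
  have hle5 : ∀ v w : V, w ∈ G.neighborFinset v →
      (G.neighborFinset v ∩ G.neighborFinset w).card ≤ 5 := by
    intro v w hw
    have hsub : G.neighborFinset v ∩ G.neighborFinset w ⊆ (G.neighborFinset v).erase w := by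
      intro z hz
      simp only [mem_inter, mem_neighborFinset] at hz
      exact mem_erase.2 ⟨fun h => (G.irrefl (h ▸ hz.2)), (G.mem_neighborFinset _ _).2 hz.1⟩
    calc (G.neighborFinset v ∩ G.neighborFinset w).card
        ≤ ((G.neighborFinset v).erase w).card := card_le_card hsub
      _ = 5 := by rw [card_erase_of_mem hw, hdeg v]
  -- find u with codegree ≤ 4
  have hex : ∃ u ∈ Nv, (Nv ∩ G.neighborFinset u).card ≤ 4 := by
    by_contra h
    push_neg at h
    have : ∑ w ∈ Nv, (Nv ∩ G.neighborFinset w).card ≥ ∑ _w ∈ Nv, 5 :=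
      Finset.sum_le_sum (fun w hw => h w hw)
    rw [Finset.sum_const, hdeg v0, smul_eq_mul] at this
    rw [hsum v0] at this
    omega
  obtain ⟨u, huNv, hu4⟩ := hex
  set Nu := G.neighborFinset u with hNu
  have huadj : G.Adj v0 u := (G.mem_neighborFinset _ _).1 huNv
  have hvNu : v0 ∈ Nu := (G.mem_neighborFinset _ _).2 huadj.symm
  have hv0Nv : v0 ∉ Nv := by simp [hNv]
  have huNu : u ∉ Nu := by simp [hNu]
  set A := Nu ∩ Nv with hA
  set d := A.card with hd
  have hdcard : d ≤ 4 := by rw [hd, hA, inter_comm]; exact hu4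
  -- full vertices have determined neighborhoods
  have hfull : ∀ a ∈ Nv, (Nv ∩ G.neighborFinset a).card = 5 →
      G.neighborFinset a = insert v0 (Nv.erase a) := by
    intro a haNv ha5
    have hsub : Nv ∩ G.neighborFinset a ⊆ Nv.erase a := by
      intro z hz
      simp only [mem_inter, mem_neighborFinset] at hz
      exact mem_erase.2 ⟨fun h => (G.irrefl (h ▸ hz.2)), hz.1⟩
    have hcard : (Nv.erase a).card = 5 := by rw [card_erase_of_mem haNv, hdeg v0]
    have heq : Nv ∩ G.neighborFinset a = Nv.erase a :=
      Finset.eq_of_subset_of_card_le hsub (by rw [hcard, ha5])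
    have hsub2 : insert v0 (Nv.erase a) ⊆ G.neighborFinset a := by
      intro z hz
      rcases mem_insert.1 hz with h | h
      · rw [h]
        exact (G.mem_neighborFinset _ _).2 ((G.mem_neighborFinset v0 a).1 haNv).symm
      · rw [← heq] at h; exact (mem_inter.1 h).2
    refine (Finset.eq_of_subset_of_card_le hsub2 ?_).symm
    rw [card_insert_of_notMem (fun h => hv0Nv (erase_subset _ _ h)), hcard, hdeg a]
  -- decomposition of Nu
  set X := Nu \ insert v0 Nv with hX
  have hAsubNu : A ⊆ Nu := inter_subset_left
  have hAsubNv : A ⊆ Nv := inter_subset_right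
  have hv0A : v0 ∉ A := fun h => hv0Nv (hAsubNv h)
  have hXeq : X = Nu \ insert v0 A := by
    ext z
    simp only [hX, mem_sdiff, mem_insert, hA, mem_inter]
    tauto
  have hXcard : X.card = 5 - d := by
    rw [hXeq, card_sdiff_of_subset (by
      intro z hz
      rcases mem_insert.1 hz with h | h
      · exact h ▸ hvNu
      · exact hAsubNu h)]
    rw [card_insert_of_notMem hv0A, hdeg u, ← hd]
    omega
  have hNudecomp : Nu = insert v0 (A ∪ X) := by
    ext z
    simp only [mem_insert, mem_union, hXeq, mem_sdiff, mem_insert, hA, mem_inter]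
    constructor
    · intro hz
      by_cases h1 : z = v0
      · exact Or.inl h1
      · by_cases h2 : z ∈ Nv
        · exact Or.inr (Or.inl ⟨hz, h2⟩)
        · exact Or.inr (Or.inr ⟨hz, by tauto⟩)
    · rintro (h | ⟨h, _⟩ | ⟨h, _⟩) <;> [exact h ▸ hvNu; exact h; exact h]
  -- nonfull subsets of A
  set Anf := A.filter (fun a => (Nv ∩ G.neighborFinset a).card ≠ 5) with hAnf
  set Af := A.filter (fun a => (Nv ∩ G.neighborFinset a).card = 5) with hAf
  set f := Anf.card with hf
  have hAfAnf : Af.card + Anf.card = d := by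
    rw [hAf, hAnf, hd]
    exact Finset.card_filter_add_card_filter_not _
  -- term bounds for the sum over Nu
  have hterm_v0 : (Nu ∩ G.neighborFinset v0).card = d := by rw [hd, hA]
  have hterm_Af : ∀ w ∈ Af, (Nu ∩ G.neighborFinset w).card ≤ d := by
    intro w hw
    rw [hAf, mem_filter] at hw
    obtain ⟨hwA, hw5⟩ := hw
    have hNw := hfull w (hAsubNv hwA) hw5
    have hsub : Nu ∩ G.neighborFinset w ⊆ insert v0 (A.erase w) := by
      intro z hz
      obtain ⟨hz1, hz2⟩ := mem_inter.1 hz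
      rw [hNw] at hz2
      rcases mem_insert.1 hz2 with h | h
      · exact mem_insert.2 (Or.inl h)
      · obtain ⟨hzw, hzNv⟩ := mem_erase.1 h
        exact mem_insert.2 (Or.inr (mem_erase.2 ⟨hzw, mem_inter.2 ⟨hz1, hzNv⟩⟩))
    calc (Nu ∩ G.neighborFinset w).card ≤ (insert v0 (A.erase w)).card := card_le_card hsub
      _ ≤ (A.erase w).card + 1 := card_insert_le _ _
      _ = d - 1 + 1 := by rw [card_erase_of_mem hwA, hd]
      _ ≤ d := by
          have : 1 ≤ d := card_pos.2 ⟨w, hwA⟩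
          omega
  have hterm_Anf : ∀ w ∈ Anf, (Nu ∩ G.neighborFinset w).card ≤ 5 := by
    intro w hw
    rw [hAnf, mem_filter] at hw
    exact hle5 u w (by rw [← hNu]; exact hAsubNu hw.1)
  have hterm_X : ∀ x ∈ X, (Nu ∩ G.neighborFinset x).card ≤ f + (5 - d - 1) := by
    intro x hxX
    have hxprops := mem_sdiff.1 (hX ▸ hxX)
    obtain ⟨hxNu, hxnot⟩ := hxprops
    have hxv0 : x ≠ v0 := fun h => hxnot (mem_insert.2 (Or.inl h))
    have hxNv : x ∉ Nv := fun h => hxnot (mem_insert.2 (Or.inr h))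
    have hsub : Nu ∩ G.neighborFinset x ⊆ Anf ∪ X.erase x := by
      intro z hz
      obtain ⟨hz1, hz2⟩ := mem_inter.1 hz
      have hzadjx : G.Adj x z := (G.mem_neighborFinset _ _).1 hz2
      have hzx : z ≠ x := fun h => G.irrefl (h ▸ hzadjx)
      have hzv0 : z ≠ v0 := by
        intro h
        subst h
        exact hxNv ((G.mem_neighborFinset _ _).2 hzadjx.symm)
      rw [hNudecomp] at hz1
      rcases mem_insert.1 hz1 with h | h
      · exact absurd h hzv0
      · rcases mem_union.1 h with hzA | hzX
        · -- z ∈ A; must be nonfull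
          refine mem_union.2 (Or.inl ?_)
          rw [hAnf, mem_filter]
          refine ⟨hzA, fun hz5 => ?_⟩
          have hNz := hfull z (hAsubNv hzA) hz5
          have : x ∈ G.neighborFinset z := (G.mem_neighborFinset _ _).2 hzadjx.symm
          rw [hNz] at this
          rcases mem_insert.1 this with h' | h'
          · exact hxv0 h'
          · exact hxNv (mem_erase.1 h').2
        · exact mem_union.2 (Or.inr (mem_erase.2 ⟨hzx, hzX⟩))
    calc (Nu ∩ G.neighborFinset x).card ≤ (Anf ∪ X.erase x).card := card_le_card hsub
      _ ≤ Anf.card + (X.erase x).card := card_union_le _ _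
      _ = f + (X.card - 1) := by rw [card_erase_of_mem hxX, hf]
      _ = f + (5 - d - 1) := by rw [hXcard]
  -- assemble the sum over Nu
  have hv0AX : v0 ∉ A ∪ X := by
    rw [mem_union]
    rintro (h | h)
    · exact hv0A h
    · rw [hXeq] at h; exact (mem_sdiff.1 h).2 (mem_insert_self _ _)
  have hdisjAX : Disjoint A X := by
    rw [Finset.disjoint_left]
    intro z hzA hzX
    rw [hX, mem_sdiff] at hzX
    exact hzX.2 (mem_insert.2 (Or.inr (hAsubNv hzA)))
  have hsumNu : 2 * c = (Nu ∩ G.neighborFinset v0).card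
      + (∑ w ∈ A, (Nu ∩ G.neighborFinset w).card)
      + (∑ x ∈ X, (Nu ∩ G.neighborFinset x).card) := by
    rw [← hsum u, ← hNu]
    have hstep : ∑ w ∈ Nu, (Nu ∩ G.neighborFinset w).card
        = ∑ w ∈ insert v0 (A ∪ X), (Nu ∩ G.neighborFinset w).card :=
      Finset.sum_congr hNudecomp (fun _ _ => rfl)
    rw [hstep, Finset.sum_insert hv0AX, Finset.sum_union hdisjAX]
    ring
  have hAsplit : ∑ w ∈ A, (Nu ∩ G.neighborFinset w).card
      = (∑ w ∈ Af, (Nu ∩ G.neighborFinset w).card)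
      + (∑ w ∈ Anf, (Nu ∩ G.neighborFinset w).card) := by
    rw [hAf, hAnf, Finset.sum_filter_add_sum_filter_not]
  have hsumAf : ∑ w ∈ Af, (Nu ∩ G.neighborFinset w).card ≤ Af.card * d := by
    have h := Finset.sum_le_card_nsmul Af (fun w => (Nu ∩ G.neighborFinset w).card) d hterm_Af
    rw [smul_eq_mul] at h
    exact h
  have hsumAnf : ∑ w ∈ Anf, (Nu ∩ G.neighborFinset w).card ≤ f * 5 := by
    have h := Finset.sum_le_card_nsmul Anf (fun w => (Nu ∩ G.neighborFinset w).card) 5 hterm_Anf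
    rw [smul_eq_mul] at h
    rw [hf]
    exact h
  have hsumX : ∑ x ∈ X, (Nu ∩ G.neighborFinset x).card ≤ (5 - d) * (f + (5 - d - 1)) := by
    have h := Finset.sum_le_card_nsmul X (fun x => (Nu ∩ G.neighborFinset x).card)
      (f + (5 - d - 1)) hterm_X
    rw [smul_eq_mul, hXcard] at h
    exact h
  -- main inequality from Nu side
  have hmain : 2 * c ≤ d + (Af.card * d + f * 5) + (5 - d) * (f + (5 - d - 1)) := by
    rw [hsumNu, hterm_v0, hAsplit]
    exact add_le_add (add_le_add le_rfl (add_le_add hsumAf hsumAnf)) hsumX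
  -- deficiency bound from Nv side: 2*c + f ≤ 20 + 2*d
  set A' := Nv ∩ Nu with hA'
  have hA'A : A' = A := by rw [hA', hA, inter_comm]
  set B := Nv \ insert u Nu with hB
  have hBcard : B.card = 5 - d := by
    have hBeq : B = Nv \ insert u A' := by
      ext z
      simp only [hB, mem_sdiff, mem_insert, hA', mem_inter]
      tauto
    have hA'card : A'.card = d := by rw [hA'A]
    have huA' : u ∉ A' := by rw [hA'A]; exact fun h => huNu (hAsubNu h)
    rw [hBeq, card_sdiff_of_subset (by
      intro z hz
      rcases mem_insert.1 hz with h | h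
      · exact h ▸ huNv
      · exact inter_subset_left h)]
    rw [card_insert_of_notMem huA', hdeg v0, hA'card]
    omega
  have hterm_B : ∀ b ∈ B, (Nv ∩ G.neighborFinset b).card ≤ 4 := by
    intro b hb
    rw [hB, mem_sdiff] at hb
    obtain ⟨hbNv, hbnot⟩ := hb
    have hbu : b ≠ u := fun h => hbnot (mem_insert.2 (Or.inl h))
    have hbNu : b ∉ Nu := fun h => hbnot (mem_insert.2 (Or.inr h))
    have hsub : Nv ∩ G.neighborFinset b ⊆ (Nv.erase b).erase u := by
      intro z hz
      obtain ⟨hz1, hz2⟩ := mem_inter.1 hz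
      have hzadj : G.Adj b z := (G.mem_neighborFinset _ _).1 hz2
      refine mem_erase.2 ⟨fun h => ?_, mem_erase.2 ⟨fun h => G.irrefl (h ▸ hzadj), hz1⟩⟩
      subst h
      exact hbNu ((G.mem_neighborFinset _ _).2 hzadj.symm)
    calc (Nv ∩ G.neighborFinset b).card ≤ ((Nv.erase b).erase u).card := card_le_card hsub
      _ ≤ (Nv.erase b).card - 1 := by
          rw [card_erase_of_mem (mem_erase.2 ⟨hbu.symm, huNv⟩)]
      _ = 4 := by rw [card_erase_of_mem hbNv, hdeg v0]
  have hterm_Anf' : ∀ a ∈ Anf, (Nv ∩ G.neighborFinset a).card ≤ 4 := by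
    intro a ha
    rw [hAnf, mem_filter] at ha
    have h5 := hle5 v0 a (by rw [← hNv]; exact hAsubNv ha.1)
    rw [← hNv] at h5
    omega
  -- T := insert u (B ∪ Anf)
  set T := insert u (B ∪ Anf) with hT
  have huB : u ∉ B := by rw [hB, mem_sdiff]; push_neg; intro _; exact mem_insert_self _ _
  have huAnf : u ∉ Anf := fun h => huNu (hAsubNu (mem_filter.1 (hAnf ▸ h)).1)
  have hdisjBAnf : Disjoint B Anf := by
    rw [Finset.disjoint_left]
    intro z hzB hzAnf
    rw [hB, mem_sdiff] at hzB
    exact hzB.2 (mem_insert.2 (Or.inr (hAsubNu (mem_filter.1 (hAnf ▸ hzAnf)).1)))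
  have huBAnf : u ∉ B ∪ Anf := by
    rw [mem_union]; rintro (h | h); exacts [huB h, huAnf h]
  have hTcard : T.card = 1 + (5 - d) + f := by
    rw [hT, card_insert_of_notMem huBAnf, card_union_of_disjoint hdisjBAnf, hBcard, hf]
    ring
  have hTsubNv : T ⊆ Nv := by
    intro z hz
    rcases mem_insert.1 (hT ▸ hz) with h | h
    · exact h ▸ huNv
    · rcases mem_union.1 h with h' | h'
      · exact (sdiff_subset) (hB ▸ h')
      · exact hAsubNv (mem_filter.1 (hAnf ▸ h')).1
  have hsumT : ∑ w ∈ T, (Nv ∩ G.neighborFinset w).card ≤ d + (5 - d) * 4 + f * 4 := by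
    rw [hT, Finset.sum_insert huBAnf, Finset.sum_union hdisjBAnf]
    have h1 : (Nv ∩ G.neighborFinset u).card = d := by rw [hd, hA, inter_comm]
    have h2 : ∑ b ∈ B, (Nv ∩ G.neighborFinset b).card ≤ (5 - d) * 4 := by
      have h := Finset.sum_le_card_nsmul B (fun b => (Nv ∩ G.neighborFinset b).card) 4 hterm_B
      rw [smul_eq_mul, hBcard] at h
      exact h
    have h3 : ∑ a ∈ Anf, (Nv ∩ G.neighborFinset a).card ≤ f * 4 := by
      have h := Finset.sum_le_card_nsmul Anf (fun a => (Nv ∩ G.neighborFinset a).card) 4 hterm_Anf'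
      rw [smul_eq_mul] at h
      rw [hf]
      exact h
    omega
  have hsumTc : ∑ w ∈ Nv \ T, (Nv ∩ G.neighborFinset w).card ≤ (6 - T.card) * 5 := by
    have := Finset.sum_le_card_nsmul (Nv \ T) (fun w => (Nv ∩ G.neighborFinset w).card) 5
      (fun w hw => hle5 v0 w (by rw [← hNv]; exact (mem_sdiff.1 hw).1))
    rw [card_sdiff_of_subset hTsubNv, hdeg v0, smul_eq_mul] at this
    exact this
  have hNvsplit : 2 * c = (∑ w ∈ T, (Nv ∩ G.neighborFinset w).card)
      + ∑ w ∈ Nv \ T, (Nv ∩ G.neighborFinset w).card := by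
    rw [← hsum v0, ← hNv, ← Finset.sum_sdiff hTsubNv]
    ring
  have hfled : f ≤ d := by
    rw [hf, hd]; exact card_le_card (hAnf ▸ filter_subset _ _)
  -- combine
  have hineq2 : 2 * c ≤ (d + (5 - d) * 4 + f * 4) + (6 - (1 + (5 - d) + f)) * 5 := by
    rw [hNvsplit]
    have h1 := hsumTc
    rw [hTcard] at h1
    omega
  have hAfc : Af.card = d - f := by omega
  rw [hAfc] at hmain
  clear_value d f
  rcases hc with rfl | rfl <;> interval_cases d <;> omega

end main

/-- For `c ∈ {13, 14}`, no (6,c)-constant graph exists: there is no finite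
simple graph on a nonempty vertex set that is 6-regular and in which the
subgraph induced by the open neighbourhood of every vertex has exactly `c`
edges. -/
theorem no_six_thirteen_or_fourteen_constant_graph :
    ∀ c ∈ ({13, 14} : Set ℕ),
      ¬ ∃ (V : Type) (_ : Fintype V) (_ : Nonempty V) (G : SimpleGraph V),
        (∀ v : V, Nat.card (G.neighborSet v) = 6) ∧
        (∀ v : V, nbhdEdgeCount G v = c) := by
  rintro c hc ⟨V, _, ⟨v0⟩, G, hreg, hcount⟩
  classical
  have hc' : c = 13 ∨ c = 14 := by simpa using hc
  have hdeg : ∀ v : V, (G.neighborFinset v).card = 6 := by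
    intro v
    rw [SimpleGraph.neighborFinset_def, Set.toFinset_card, ← Nat.card_eq_fintype_card]
    exact hreg v
  have hsum : ∀ v : V, ∑ w ∈ G.neighborFinset v,
      (G.neighborFinset v ∩ G.neighborFinset w).card = 2 * c := by
    intro v
    rw [← handshake_nbhd G v, hcount v]
  exact main_contradiction G c hc' hdeg hsum v0
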